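/- Suppose V is infinite-dimensional over K and the alternating n-linear form f is non-degenerate. Let U be a finite-dimensional K-subspace of V, let t₁, …, t_m ∈ ⋀^{n-1} V be K-linearly independent, and let k₁, …, k_m ∈ K. Then there exists w ∈ V with w ∉ U such that ⟨t_i, w⟩₂ = k_i for all i ≤ m. -/

import Mathlib

variable {K : Type*} [Field K] {V : Type*} [AddCommGroup V] [Module K V]

/-- The pure wedge `v₁ ∧ ⋯ ∧ v_m` as an element of the `m`-th exterior power. -/
noncomputable def wedge (m : ℕ) (v : Fin m → V) : ⋀[K]^m V :=
  ⟨ExteriorAlgebra.ιMulti K m v, ExteriorAlgebra.ιMulti_range K m (Set.mem_range_self v)⟩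

/-- `B` is the bilinear pairing `⋀^m V × V → K` induced by the alternating
`(m+1)`-linear form `f`, determined on pure wedges by
`⟨v₁ ∧ ⋯ ∧ v_m, w⟩₂ = f (v₁, …, v_m, w)`. -/
def IsInducedPairing (m : ℕ) (f : V [⋀^Fin (m+1)]→ₗ[K] K)
    (B : ⋀[K]^m V →ₗ[K] V →ₗ[K] K) : Prop :=
  ∀ (v : Fin m → V) (w : V), B (wedge m v) w = f (Fin.snoc v w)

/-- The form is non-degenerate. -/
def PairNondegenerate (m : ℕ) (B : ⋀[K]^m V →ₗ[K] V →ₗ[K] K) : Prop :=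
  ∀ t : ⋀[K]^m V, t ≠ 0 → ∃ w : V, B t w ≠ 0

/-- The form is generic: every finite linearly independent family in `⋀^m V` can be
sent to any prescribed tuple of scalars by pairing with a single vector `w ∈ V`. -/
def PairGeneric (m : ℕ) (B : ⋀[K]^m V →ₗ[K] V →ₗ[K] K) : Prop :=
  ∀ (l : ℕ) (t : Fin l → ⋀[K]^m V), LinearIndependent K t →
    ∀ k : Fin l → K, ∃ w : V, ∀ i, B (t i) w = k i

/-!
Statement 9: Suppose `V` is infinite-dimensional over `K` and the alternating
`(m+1)`-linear form `f` (with induced pairing `B`) is non-degenerate. Let `U`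
be a finite-dimensional subspace of `V`, let `t₁, …, t_l ∈ ⋀^m V` be linearly
independent and `k₁, …, k_l ∈ K`. Then there is `w ∈ V` with `w ∉ U` and
`⟨t_i, w⟩₂ = k_i` for all `i`.
-/

theorem statement9 (m : ℕ) (hm : 1 ≤ m) (hV : ¬ FiniteDimensional K V)
    (f : V [⋀^Fin (m+1)]→ₗ[K] K) (B : ⋀[K]^m V →ₗ[K] V →ₗ[K] K)
    (hB : IsInducedPairing m f B) (hnd : PairNondegenerate m B)
    (U : Submodule K V) (hU : FiniteDimensional K ↥U)
    (l : ℕ) (t : Fin l → ⋀[K]^m V) (ht : LinearIndependent K t) (k : Fin l → K) :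
    ∃ w : V, w ∉ U ∧ ∀ i, B (t i) w = k i := by
  classical
  set φ : V →ₗ[K] (Fin l → K) := LinearMap.pi fun i => B (t i) with hφ
  -- φ is surjective
  have hsurj : Function.Surjective φ := by
    rw [← LinearMap.range_eq_top]
    by_contra hne
    obtain ⟨g, hg0, hgbot⟩ := (LinearMap.range φ).exists_dual_map_eq_bot_of_lt_top
      (lt_top_iff_ne_top.2 hne) inferInstance
    set c : Fin l → K := fun i => g (fun j => if i = j then 1 else 0) with hc
    have hgc : ∀ x, g x = ∑ i, x i * c i := by
      intro x
      rw [LinearMap.pi_apply_eq_sum_univ g x]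
      simp [hc, smul_eq_mul]
    have hcne : c ≠ 0 := by
      intro h
      refine hg0 (LinearMap.ext fun x => ?_)
      rw [hgc]
      simp [h]
    set s : ⋀[K]^m V := ∑ i, c i • t i with hs
    have hsne : s ≠ 0 := by
      intro h
      apply hcne
      have := linearIndependent_iff.1 ht (Finsupp.equivFunOnFinite.symm c)
      have h2 : (Finsupp.linearCombination K t) (Finsupp.equivFunOnFinite.symm c) = 0 := by
        rw [Finsupp.linearCombination_apply, Finsupp.sum_fintype]
        · simpa using h
        · simp
      have := this h2
      funext i
      exact DFunLike.congr_fun this i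
    obtain ⟨w, hw⟩ := hnd s hsne
    apply hw
    have : φ w ∈ LinearMap.range φ := LinearMap.mem_range_self φ w
    have hg : g (φ w) = 0 := by
      have : g (φ w) ∈ (LinearMap.range φ).map g := Submodule.mem_map_of_mem this
      rw [hgbot] at this
      exact (Submodule.mem_bot K).1 this
    rw [hgc] at hg
    rw [hs]
    simp only [map_sum, LinearMap.sum_apply, LinearMap.smul_apply, map_smul, smul_eq_mul]
    rw [← hg]
    refine Finset.sum_congr rfl fun i _ => ?_
    rw [mul_comm]
    rfl
  obtain ⟨w₀, hw₀⟩ := hsurj k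
  -- ker φ is infinite dimensional
  have hker : ¬ (LinearMap.ker φ ≤ U) := by
    intro hle
    apply hV
    have hkfd : FiniteDimensional K (LinearMap.ker φ) :=
      Submodule.finiteDimensional_of_le hle
    have : (⊤ : Submodule K V).FG := by
      apply Submodule.fg_of_fg_map_of_fg_inf_ker φ
      · exact Module.Finite.iff_fg.1 inferInstance
      · rw [top_inf_eq]
        exact Module.Finite.iff_fg.1 hkfd
    have : Module.Finite K V := Module.finite_def.2 this
    infer_instance
  by_cases hw₀U : w₀ ∈ U
  · obtain ⟨u, huker, huU⟩ := Set.not_subset.1 hker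
    refine ⟨w₀ + u, ?_, ?_⟩
    · intro h
      exact huU (by simpa using U.sub_mem h hw₀U)
    · intro i
      have : φ (w₀ + u) = k := by
        rw [map_add, LinearMap.mem_ker.1 huker, add_zero, hw₀]
      exact congrFun this i
  · exact ⟨w₀, hw₀U, fun i => congrFun hw₀ i⟩
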